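/- Let x_1, …, x_θ be real numbers, let C ⊆ {1,…,θ} with |C| ≥ θ − f where θ ≥ 2f + 1 and f ≥ 0, let M ∈ ℝ be arbitrary, and let β = θ − 2f ≥ 1. Let S ⊆ {1,…,θ} be a set of β indices minimizing |x_i − M|, i.e. |x_i − M| ≤ |x_j − M| for every i ∈ S and j ∉ S. Then for every i ∈ S there exists c ∈ C with |x_i − M| ≤ |x_c − M|; in particular max_{i∈S} |x_i − M| ≤ max_{c∈C} |x_c − M|. -/
import Mathlib


/-- let `x_1, …, x_θ` be reals, `C` a set of at least `θ - f` correct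
indices with `θ ≥ 2f + 1`, `M ∈ ℝ` arbitrary, and `S` a set of `β = θ - 2f` indices
minimizing `|x i - M|`. Then every `i ∈ S` is no farther from `M` than some correct
value; in particular `max_{i ∈ S} |x i - M| ≤ max_{c ∈ C} |x c - M|`. -/
theorem closest_to_median_dominated_by_correct (θ f : ℕ) (hθ : 2 * f + 1 ≤ θ)
    (x : Fin θ → ℝ) (C : Finset (Fin θ)) (hC : θ - f ≤ C.card) (M : ℝ)
    (S : Finset (Fin θ)) (hScard : S.card = θ - 2 * f)
    (hSmin : ∀ i ∈ S, ∀ j ∉ S, |x i - M| ≤ |x j - M|) :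
    (∀ i ∈ S, ∃ c ∈ C, |x i - M| ≤ |x c - M|) ∧
      S.sup' (Finset.card_pos.mp (by omega)) (fun i => |x i - M|) ≤
        C.sup' (Finset.card_pos.mp (by omega)) (fun c => |x c - M|) := by
  have hmain : ∀ i ∈ S, ∃ c ∈ C, |x i - M| ≤ |x c - M| := by
    intro i hi
    by_cases h : (C \ S).Nonempty
    · obtain ⟨c, hc⟩ := h
      rw [Finset.mem_sdiff] at hc
      exact ⟨c, hc.1, hSmin i hi c hc.2⟩
    · rw [Finset.not_nonempty_iff_eq_empty, Finset.sdiff_eq_empty_iff_subset] at h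
      have h1 := Finset.card_le_card h
      have h2 := S.card_le_univ
      simp [Finset.card_univ] at h2
      have hf : f = 0 := by omega
      have : C = Finset.univ := Finset.eq_univ_of_card _ (by
        have := C.card_le_univ; simp [Finset.card_univ] at this ⊢; omega)
      exact ⟨i, this ▸ Finset.mem_univ i, le_refl _⟩
  refine ⟨hmain, Finset.sup'_le _ _ fun i hi => ?_⟩
  obtain ⟨c, hc, hle⟩ := hmain i hi
  exact hle.trans (Finset.le_sup' (fun c => |x c - M|) hc)
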